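/- Suppose γ > π(w₀), w is a solution with parameters (w₀,γ), and there exists some x > 0 with w′(x) < 0. Then there exists a unique x★ > 0 such that w is strictly increasing on [0, x★] and strictly decreasing on [x★, ∞); moreover w(x) → −∞ as x → ∞. -/

import Mathlib

open Set MeasureTheory Filter Topology

/-- `piU U c w = min_{μ ∈ U} (μ·w + c(μ))`, realized as an infimum. -/
noncomputable def piU (U : Set ℝ) (c : ℝ → ℝ) (w : ℝ) : ℝ :=
  sInf ((fun μ => μ * w + c μ) '' U)

/-- `w` is a continuously differentiable solution on `[0,∞)` of
`(σ²/2)·w′(x) + π(w(x)) + h(x) = γ` with `w(0) = w₀`, with derivative `w'`. -/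
def IsSolution (σ : ℝ) (U : Set ℝ) (c h : ℝ → ℝ) (w₀ γ : ℝ) (w w' : ℝ → ℝ) : Prop :=
  w 0 = w₀ ∧ ContinuousOn w' (Set.Ici 0) ∧
  (∀ x ∈ Set.Ici (0:ℝ), HasDerivWithinAt w (w' x) (Set.Ici 0) x) ∧
  (∀ x ∈ Set.Ici (0:ℝ), σ ^ 2 / 2 * w' x + piU U c (w x) + h x = γ)

lemma lipschitz_piU (U : Set ℝ) (hUne : U.Nonempty) (hUcpt : IsCompact U)
    (c : ℝ → ℝ) (hc : Continuous c) :
    ∃ L : ℝ, 0 ≤ L ∧ ∀ a b : ℝ, piU U c a - piU U c b ≤ L * |a - b| := by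
  obtain ⟨L, hLmem⟩ := (hUcpt.image continuous_abs).bddAbove
  have hLb : ∀ μ ∈ U, |μ| ≤ L := fun μ hμ => hLmem (mem_image_of_mem _ hμ)
  obtain ⟨μ₀, hμ₀⟩ := id hUne
  refine ⟨L, le_trans (abs_nonneg μ₀) (hLb μ₀ hμ₀), fun a b => ?_⟩
  have hcont : ∀ t : ℝ, ContinuousOn (fun μ => μ * t + c μ) U :=
    fun t => ((continuous_id.mul continuous_const).add hc).continuousOn
  obtain ⟨μ, hμU, hμmin⟩ := hUcpt.exists_isMinOn hUne (hcont b)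
  have hb_eq : piU U c b = μ * b + c μ := by
    refine IsLeast.csInf_eq ⟨mem_image_of_mem _ hμU, ?_⟩
    rintro y ⟨ν, hν, rfl⟩
    exact hμmin hν
  have ha_le : piU U c a ≤ μ * a + c μ := by
    refine csInf_le ?_ (mem_image_of_mem _ hμU)
    exact (hUcpt.image_of_continuousOn (hcont a)).bddBelow
  have : piU U c a - piU U c b ≤ μ * (a - b) := by rw [hb_eq]; nlinarith [ha_le]
  calc piU U c a - piU U c b ≤ μ * (a - b) := this
    _ ≤ |μ * (a - b)| := le_abs_self _
    _ = |μ| * |a - b| := abs_mul _ _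
    _ ≤ L * |a - b| := by
        exact mul_le_mul_of_nonneg_right (hLb μ hμU) (abs_nonneg _)

lemma aux1 (σ L γ : ℝ) (hσ : 0 < σ) (hL : 0 ≤ L) (P h w w' : ℝ → ℝ)
    (hP : ∀ a b : ℝ, P a - P b ≤ L * |a - b|)
    (hhcont : ContinuousOn h (Set.Ici 0)) (hhmono : StrictMonoOn h (Set.Ici 0))
    (hwc : ContinuousOn w (Set.Ici 0))
    (hd : ∀ x : ℝ, 0 < x → HasDerivAt w (w' x) x)
    (hODE : ∀ x ∈ Set.Ici (0:ℝ), σ ^ 2 / 2 * w' x + P (w x) + h x = γ)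
    (p b : ℝ) (hp : 0 ≤ p) (hpb : p < b)
    (hneg : ∀ y ∈ Set.Icc p b, w' y ≤ 0) (hb0 : w' b = 0) : False := by
  have hb : (0:ℝ) < b := lt_of_le_of_lt hp hpb
  set K := 2 * L / σ ^ 2 with hKdef
  have hσ2 : (0:ℝ) < σ ^ 2 / 2 := by positivity
  have hKs : K * (σ ^ 2 / 2) = L := by
    have hs : σ ^ 2 ≠ 0 := by positivity
    rw [hKdef, div_mul_eq_mul_div, div_eq_iff hs]; ring
  have hIccIci : Set.Icc p b ⊆ Set.Ici (0:ℝ) := fun t ht => le_trans hp ht.1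
  -- w is antitone on [p,b]
  have hanti : AntitoneOn w (Set.Icc p b) := by
    refine antitoneOn_of_deriv_nonpos (convex_Icc p b) (hwc.mono hIccIci) ?_ ?_
    · intro x hx
      rw [interior_Icc] at hx
      exact ((hd x (lt_of_le_of_lt hp hx.1)).differentiableAt).differentiableWithinAt
    · intro x hx
      rw [interior_Icc] at hx
      rw [(hd x (lt_of_le_of_lt hp hx.1)).deriv]
      exact hneg x (Set.Ioo_subset_Icc_self hx)
  have hγb : γ = P (w b) + h b := by
    have := hODE b (le_of_lt hb)
    rw [hb0] at this; linarith
  -- extended h, continuous everywhere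
  set hE : ℝ → ℝ := fun t => h (max t 0) with hEdef
  have hmaxc : Continuous (fun t : ℝ => max t 0) := continuous_id.max continuous_const
  have hEc : Continuous hE := hhcont.comp_continuous hmaxc (fun x => Set.mem_Ici.2 (le_max_right _ _))
  have hEeq : ∀ t : ℝ, 0 ≤ t → hE t = h t := by
    intro t ht; simp [hEdef, max_eq_left ht]
  -- integrand
  set f : ℝ → ℝ := fun t => Real.exp (K * t) * (h b - hE t) with hfdef
  have hfc : Continuous f := by
    exact (Real.continuous_exp.comp (continuous_const.mul continuous_id)).mul
      (continuous_const.sub hEc)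
  -- the comparison function
  set Φ : ℝ → ℝ := fun y => Real.exp (K * y) * (σ ^ 2 / 2 * (w y - w b)) - ∫ t in p..y, f t
    with hΦdef
  -- pointwise key inequality
  have key : ∀ y ∈ Set.Icc p b,
      0 ≤ K * (σ ^ 2 / 2 * (w y - w b)) + σ ^ 2 / 2 * w' y - (h b - h y) := by
    intro y hy
    have hy0 : (0:ℝ) ≤ y := hIccIci hy
    have hODEy := hODE y hy0
    have hwyb : w b ≤ w y := hanti hy (Set.right_mem_Icc.2 (le_of_lt hpb)) hy.2
    have h2 : P (w y) - P (w b) ≤ L * (w y - w b) := by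
      have := hP (w y) (w b)
      rwa [abs_of_nonneg (sub_nonneg.2 hwyb)] at this
    have h3 : K * (σ ^ 2 / 2 * (w y - w b)) = L * (w y - w b) := by
      rw [← hKs]; ring
    linarith
  -- derivative of Φ
  have hΦd : ∀ y ∈ Set.Ioo p b, HasDerivAt Φ
      ((K * Real.exp (K * y)) * (σ ^ 2 / 2 * (w y - w b))
        + Real.exp (K * y) * (σ ^ 2 / 2 * w' y) - f y) y := by
    intro y hy
    have hy0 : (0:ℝ) < y := lt_of_le_of_lt hp hy.1
    have h1 : HasDerivAt (fun y => Real.exp (K * y)) (K * Real.exp (K * y)) y := by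
      have := ((hasDerivAt_id y).const_mul K).exp
      simpa [mul_comm] using this
    have h2 : HasDerivAt (fun y => σ ^ 2 / 2 * (w y - w b)) (σ ^ 2 / 2 * w' y) y :=
      ((hd y hy0).sub_const _).const_mul _
    have h3 : HasDerivAt (fun u => ∫ t in p..u, f t) (f y) y :=
      intervalIntegral.integral_hasDerivAt_right (hfc.intervalIntegrable _ _)
        (hfc.stronglyMeasurableAtFilter _ _) hfc.continuousAt
    exact (h1.mul h2).sub h3
  -- Φ is monotone on [p,b]
  have hΦc : ContinuousOn Φ (Set.Icc p b) := by
    apply ContinuousOn.sub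
    · exact ((Real.continuous_exp.comp (continuous_const.mul continuous_id)).continuousOn).mul
        (((hwc.mono hIccIci).sub continuousOn_const).const_smul (σ ^ 2 / 2) |>.congr
          (fun x _ => rfl))
    · exact (intervalIntegral.continuous_primitive (fun a b => hfc.intervalIntegrable a b) p).continuousOn
  have hmono : MonotoneOn Φ (Set.Icc p b) := by
    refine monotoneOn_of_deriv_nonneg (convex_Icc p b) hΦc ?_ ?_
    · intro x hx
      rw [interior_Icc] at hx
      exact (hΦd x hx).differentiableAt.differentiableWithinAt
    · intro x hx
      rw [interior_Icc] at hx
      rw [(hΦd x hx).deriv]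
      have hx0 : (0:ℝ) ≤ x := le_trans hp (le_of_lt hx.1)
      have hfx : f x = Real.exp (K * x) * (h b - h x) := by rw [hfdef]; simp [hEeq x hx0]
      have hk := key x (Set.Ioo_subset_Icc_self hx)
      have he : (0:ℝ) < Real.exp (K * x) := Real.exp_pos _
      calc (0:ℝ) ≤ Real.exp (K * x) *
            (K * (σ ^ 2 / 2 * (w x - w b)) + σ ^ 2 / 2 * w' x - (h b - h x)) := by positivity
        _ = (K * Real.exp (K * x)) * (σ ^ 2 / 2 * (w x - w b))
            + Real.exp (K * x) * (σ ^ 2 / 2 * w' x) - f x := by rw [hfx]; ring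
  have hle : Φ p ≤ Φ b :=
    hmono (Set.left_mem_Icc.2 (le_of_lt hpb)) (Set.right_mem_Icc.2 (le_of_lt hpb)) (le_of_lt hpb)
  have hΦp : 0 ≤ Φ p := by
    have hwpb : w b ≤ w p := hanti (Set.left_mem_Icc.2 (le_of_lt hpb))
      (Set.right_mem_Icc.2 (le_of_lt hpb)) (le_of_lt hpb)
    have : (∫ t in p..p, f t) = 0 := intervalIntegral.integral_same
    rw [hΦdef]; simp only [this]
    have : 0 ≤ Real.exp (K * p) * (σ ^ 2 / 2 * (w p - w b)) :=
      mul_nonneg (Real.exp_pos _).le (mul_nonneg hσ2.le (sub_nonneg.2 hwpb))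
    linarith
  have hint : 0 < ∫ t in p..b, f t := by
    refine intervalIntegral.intervalIntegral_pos_of_pos_on (hfc.intervalIntegrable _ _) ?_ hpb
    intro t ht
    have ht0 : (0:ℝ) ≤ t := le_trans hp (le_of_lt ht.1)
    have : h t < h b := hhmono ht0 (le_of_lt hb) ht.2
    have he : (0:ℝ) < Real.exp (K * t) := Real.exp_pos _
    rw [hfdef]; simp only [hEeq t ht0]
    exact mul_pos he (sub_pos.2 this)
  have hΦb : Φ b < 0 := by
    rw [hΦdef]; simp only [sub_self, mul_zero]
    linarith
  linarith

lemma aux2 (σ L γ : ℝ) (hσ : 0 < σ) (hL : 0 ≤ L) (P h w w' : ℝ → ℝ)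
    (hP : ∀ a b : ℝ, P a - P b ≤ L * |a - b|)
    (hhcont : ContinuousOn h (Set.Ici 0)) (hhmono : StrictMonoOn h (Set.Ici 0))
    (hwc : ContinuousOn w (Set.Ici 0))
    (hd : ∀ x : ℝ, 0 < x → HasDerivAt w (w' x) x)
    (hODE : ∀ x ∈ Set.Ici (0:ℝ), σ ^ 2 / 2 * w' x + P (w x) + h x = γ)
    (p b : ℝ) (hp : 0 ≤ p) (hpb : p < b)
    (hpos : ∀ y ∈ Set.Icc p b, 0 ≤ w' y) (hp0 : w' p = 0) : False := by
  have hb : (0:ℝ) < b := lt_of_le_of_lt hp hpb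
  set K := 2 * L / σ ^ 2 with hKdef
  have hσ2 : (0:ℝ) < σ ^ 2 / 2 := by positivity
  have hKs : K * (σ ^ 2 / 2) = L := by
    have hs : σ ^ 2 ≠ 0 := by positivity
    rw [hKdef, div_mul_eq_mul_div, div_eq_iff hs]; ring
  have hIccIci : Set.Icc p b ⊆ Set.Ici (0:ℝ) := fun t ht => le_trans hp ht.1
  have hmonow : MonotoneOn w (Set.Icc p b) := by
    refine monotoneOn_of_deriv_nonneg (convex_Icc p b) (hwc.mono hIccIci) ?_ ?_
    · intro x hx
      rw [interior_Icc] at hx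
      exact ((hd x (lt_of_le_of_lt hp hx.1)).differentiableAt).differentiableWithinAt
    · intro x hx
      rw [interior_Icc] at hx
      rw [(hd x (lt_of_le_of_lt hp hx.1)).deriv]
      exact hpos x (Set.Ioo_subset_Icc_self hx)
  have hγp : γ = P (w p) + h p := by
    have := hODE p hp
    rw [hp0] at this; linarith
  set hE : ℝ → ℝ := fun t => h (max t 0) with hEdef
  have hmaxc : Continuous (fun t : ℝ => max t 0) := continuous_id.max continuous_const
  have hEc : Continuous hE := hhcont.comp_continuous hmaxc (fun x => Set.mem_Ici.2 (le_max_right _ _))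
  have hEeq : ∀ t : ℝ, 0 ≤ t → hE t = h t := by
    intro t ht; simp [hEdef, max_eq_left ht]
  set f : ℝ → ℝ := fun t => Real.exp (-(K * t)) * (hE t - h p) with hfdef
  have hfc : Continuous f := by
    exact (Real.continuous_exp.comp (continuous_const.mul continuous_id).neg).mul
      (hEc.sub continuous_const)
  set Ψ : ℝ → ℝ := fun y => Real.exp (-(K * y)) * (σ ^ 2 / 2 * (w y - w p)) + ∫ t in p..y, f t
    with hΨdef
  have key : ∀ y ∈ Set.Icc p b,
      0 ≤ K * (σ ^ 2 / 2 * (w y - w p)) - σ ^ 2 / 2 * w' y - (h y - h p) := by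
    intro y hy
    have hy0 : (0:ℝ) ≤ y := hIccIci hy
    have hODEy := hODE y hy0
    have hwyp : w p ≤ w y := hmonow (Set.left_mem_Icc.2 (le_of_lt hpb)) hy hy.1
    have h2 : P (w p) - P (w y) ≤ L * (w y - w p) := by
      have := hP (w p) (w y)
      rwa [abs_sub_comm, abs_of_nonneg (sub_nonneg.2 hwyp)] at this
    have h3 : K * (σ ^ 2 / 2 * (w y - w p)) = L * (w y - w p) := by
      rw [← hKs]; ring
    linarith
  have hΨd : ∀ y ∈ Set.Ioo p b, HasDerivAt Ψ
      ((-K * Real.exp (-(K * y))) * (σ ^ 2 / 2 * (w y - w p))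
        + Real.exp (-(K * y)) * (σ ^ 2 / 2 * w' y) + f y) y := by
    intro y hy
    have hy0 : (0:ℝ) < y := lt_of_le_of_lt hp hy.1
    have h1 : HasDerivAt (fun y => Real.exp (-(K * y))) (-K * Real.exp (-(K * y))) y := by
      have := (((hasDerivAt_id y).const_mul K).neg).exp
      simpa [mul_comm] using this
    have h2 : HasDerivAt (fun y => σ ^ 2 / 2 * (w y - w p)) (σ ^ 2 / 2 * w' y) y :=
      ((hd y hy0).sub_const _).const_mul _
    have h3 : HasDerivAt (fun u => ∫ t in p..u, f t) (f y) y :=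
      intervalIntegral.integral_hasDerivAt_right (hfc.intervalIntegrable _ _)
        (hfc.stronglyMeasurableAtFilter _ _) hfc.continuousAt
    exact (h1.mul h2).add h3
  have hΨc : ContinuousOn Ψ (Set.Icc p b) := by
    apply ContinuousOn.add
    · exact ((Real.continuous_exp.comp (continuous_const.mul continuous_id).neg).continuousOn).mul
        (continuousOn_const.mul ((hwc.mono hIccIci).sub continuousOn_const))
    · exact (intervalIntegral.continuous_primitive (fun a b => hfc.intervalIntegrable a b) p).continuousOn
  have hantiΨ : AntitoneOn Ψ (Set.Icc p b) := by
    refine antitoneOn_of_deriv_nonpos (convex_Icc p b) hΨc ?_ ?_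
    · intro x hx
      rw [interior_Icc] at hx
      exact (hΨd x hx).differentiableAt.differentiableWithinAt
    · intro x hx
      rw [interior_Icc] at hx
      rw [(hΨd x hx).deriv]
      have hx0 : (0:ℝ) ≤ x := le_trans hp (le_of_lt hx.1)
      have hfx : f x = Real.exp (-(K * x)) * (h x - h p) := by rw [hfdef]; simp [hEeq x hx0]
      have hk := key x (Set.Ioo_subset_Icc_self hx)
      have he : (0:ℝ) < Real.exp (-(K * x)) := Real.exp_pos _
      have : Real.exp (-(K * x)) *
          (K * (σ ^ 2 / 2 * (w x - w p)) - σ ^ 2 / 2 * w' x - (h x - h p)) ≥ 0 :=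
        mul_nonneg he.le hk
      have heq : (-K * Real.exp (-(K * x))) * (σ ^ 2 / 2 * (w x - w p))
          + Real.exp (-(K * x)) * (σ ^ 2 / 2 * w' x) + f x
          = - (Real.exp (-(K * x)) *
            (K * (σ ^ 2 / 2 * (w x - w p)) - σ ^ 2 / 2 * w' x - (h x - h p))) := by
        rw [hfx]; ring
      rw [heq]
      linarith
  have hle : Ψ b ≤ Ψ p :=
    hantiΨ (Set.left_mem_Icc.2 (le_of_lt hpb)) (Set.right_mem_Icc.2 (le_of_lt hpb)) (le_of_lt hpb)
  have hΨp : Ψ p = 0 := by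
    rw [hΨdef]; simp
  have hint : 0 < ∫ t in p..b, f t := by
    refine intervalIntegral.intervalIntegral_pos_of_pos_on (hfc.intervalIntegrable _ _) ?_ hpb
    intro t ht
    have ht0 : (0:ℝ) ≤ t := le_trans hp (le_of_lt ht.1)
    have : h p < h t := hhmono hp ht0 ht.1
    have he : (0:ℝ) < Real.exp (-(K * t)) := Real.exp_pos _
    rw [hfdef]; simp only [hEeq t ht0]
    exact mul_pos he (sub_pos.2 this)
  have hΨb : 0 < Ψ b := by
    have hwbp : w p ≤ w b := hmonow (Set.left_mem_Icc.2 (le_of_lt hpb))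
      (Set.right_mem_Icc.2 (le_of_lt hpb)) (le_of_lt hpb)
    have h1 : 0 ≤ Real.exp (-(K * b)) * (σ ^ 2 / 2 * (w b - w p)) :=
      mul_nonneg (Real.exp_pos _).le (mul_nonneg hσ2.le (sub_nonneg.2 hwbp))
    rw [hΨdef]
    simp only
    linarith
  linarith

theorem stmt_11 (σ : ℝ) (hσ : 0 < σ) (U : Set ℝ) (hUne : U.Nonempty) (hUcpt : IsCompact U)
    (c : ℝ → ℝ) (hc : Continuous c) (h : ℝ → ℝ)
    (hhcont : ContinuousOn h (Set.Ici 0)) (hhmono : StrictMonoOn h (Set.Ici 0))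
    (hh0 : h 0 = 0) (hhtop : Filter.Tendsto h Filter.atTop Filter.atTop)
    (w₀ γ : ℝ) (w w' : ℝ → ℝ) (hw : IsSolution σ U c h w₀ γ w w')
    (hγ : piU U c w₀ < γ) (hneg : ∃ x : ℝ, 0 < x ∧ w' x < 0) :
    (∃! xs : ℝ, 0 < xs ∧ StrictMonoOn w (Set.Icc 0 xs) ∧ StrictAntiOn w (Set.Ici xs)) ∧
    Filter.Tendsto w Filter.atTop Filter.atBot := by
  obtain ⟨hw0, hw'c, hwd, hODE⟩ := hw
  obtain ⟨L, hL0, hLip⟩ := lipschitz_piU U hUne hUcpt c hc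
  set P := piU U c with hPdef
  have hd : ∀ x : ℝ, 0 < x → HasDerivAt w (w' x) x :=
    fun x hx => (hwd x (le_of_lt hx)).hasDerivAt (Ici_mem_nhds hx)
  have hwc : ContinuousOn w (Set.Ici 0) := fun x hx => (hwd x hx).continuousWithinAt
  have hσ2 : (0:ℝ) < σ ^ 2 / 2 := by positivity
  have hw'0 : 0 < w' 0 := by
    have := hODE 0 (Set.mem_Ici.2 le_rfl)
    rw [hw0, hh0] at this
    nlinarith
  -- negativity of w' persists
  have negp : ∀ z, 0 ≤ z → w' z < 0 → ∀ y, z < y → w' y < 0 := by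
    intro z hz hwz y hzy
    by_contra hy0
    push_neg at hy0
    set S := Set.Icc z y ∩ w' ⁻¹' (Set.Ici 0) with hSdef
    have hIccz : Set.Icc z y ⊆ Set.Ici (0:ℝ) := fun t ht => le_trans hz ht.1
    have hScl : IsClosed S :=
      (hw'c.mono hIccz).preimage_isClosed_of_isClosed isClosed_Icc isClosed_Ici
    have hSne : S.Nonempty := ⟨y, ⟨le_of_lt hzy, le_rfl⟩, hy0⟩
    have hSbdd : BddBelow S := ⟨z, fun t ht => ht.1.1⟩
    set b := sInf S with hbdef
    have hbS : b ∈ S := hScl.csInf_mem hSne hSbdd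
    have hbz : z < b := by
      rcases lt_or_eq_of_le hbS.1.1 with h' | h'
      · exact h'
      · exfalso; rw [← h'] at hbS; exact absurd hbS.2 (not_le.2 hwz)
    have hlt : ∀ t, z ≤ t → t < b → w' t < 0 := by
      intro t ht1 ht2
      by_contra hh'
      push_neg at hh'
      have : t ∈ S := ⟨⟨ht1, le_trans (le_of_lt ht2) hbS.1.2⟩, hh'⟩
      exact absurd (csInf_le hSbdd this) (not_le.2 ht2)
    have hb0' : w' b ≤ 0 := by
      have hbpos : (0:ℝ) < b := lt_of_le_of_lt hz hbz
      have htd : Filter.Tendsto w' (𝓝[<] b) (𝓝 (w' b)) :=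
        ((hw'c.continuousAt (Ici_mem_nhds hbpos)).tendsto).mono_left nhdsWithin_le_nhds
      refine le_of_tendsto htd ?_
      filter_upwards [Ioo_mem_nhdsLT_of_mem (⟨hbz, le_rfl⟩ : b ∈ Set.Ioc z b)] with t ht
      exact le_of_lt (hlt t (le_of_lt ht.1) ht.2)
    have hb0 : w' b = 0 := le_antisymm hb0' hbS.2
    refine aux1 σ L γ hσ hL0 P h w w' hLip hhcont hhmono hwc hd hODE z b hz hbz ?_ hb0
    intro t ht
    rcases lt_or_eq_of_le ht.2 with h' | h'
    · exact le_of_lt (hlt t ht.1 h')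
    · rw [h', hb0]
  -- key step
  have key : ∀ p, 0 ≤ p → w' p ≤ 0 → ∀ y, p < y → w' y < 0 := by
    intro p hp hwp y hpy
    rcases lt_or_eq_of_le hwp with hlt | heq
    · exact negp p hp hlt y hpy
    · have hz : ∃ z ∈ Set.Ioo p y, w' z < 0 := by
        by_contra hcon
        push_neg at hcon
        refine aux2 σ L γ hσ hL0 P h w w' hLip hhcont hhmono hwc hd hODE p ((p + y) / 2)
          hp (by linarith) ?_ heq
        intro t ht
        rcases eq_or_lt_of_le ht.1 with h' | h'
        · rw [← h', heq]
        · exact hcon t ⟨h', lt_of_le_of_lt ht.2 (by linarith)⟩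
      obtain ⟨z, hzmem, hz'⟩ := hz
      exact negp z (le_trans hp (le_of_lt hzmem.1)) hz' y hzmem.2
  -- the turning point
  obtain ⟨x₁, hx₁pos, hx₁neg⟩ := hneg
  set A := Set.Ici (0:ℝ) ∩ w' ⁻¹' (Set.Iic 0) with hAdef
  have hAcl : IsClosed A := hw'c.preimage_isClosed_of_isClosed isClosed_Ici isClosed_Iic
  have hAne : A.Nonempty := ⟨x₁, le_of_lt hx₁pos, le_of_lt hx₁neg⟩
  have hAbdd : BddBelow A := ⟨0, fun t ht => ht.1⟩
  set xs := sInf A with hxsdef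
  have hxsA : xs ∈ A := hAcl.csInf_mem hAne hAbdd
  have hxs0 : (0:ℝ) ≤ xs := hxsA.1
  have hxsneg : w' xs ≤ 0 := hxsA.2
  have hxspos : (0:ℝ) < xs := by
    rcases lt_or_eq_of_le hxs0 with h' | h'
    · exact h'
    · exfalso; rw [← h'] at hxsneg; exact absurd hxsneg (not_le.2 hw'0)
  have hpos_lt : ∀ t, 0 ≤ t → t < xs → 0 < w' t := by
    intro t ht1 ht2
    by_contra hh'
    push_neg at hh'
    exact absurd (csInf_le hAbdd ⟨ht1, hh'⟩) (not_le.2 ht2)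
  have hnegIoi : ∀ y, xs < y → w' y < 0 := key xs hxs0 hxsneg
  -- strict monotonicity
  have hmono : StrictMonoOn w (Set.Icc 0 xs) := by
    refine strictMonoOn_of_deriv_pos (convex_Icc 0 xs) (hwc.mono (fun t ht => ht.1)) ?_
    intro x hx
    rw [interior_Icc] at hx
    rw [(hd x hx.1).deriv]
    exact hpos_lt x (le_of_lt hx.1) hx.2
  have hanti : StrictAntiOn w (Set.Ici xs) := by
    refine strictAntiOn_of_deriv_neg (convex_Ici xs) (hwc.mono (Set.Ici_subset_Ici.2 hxs0)) ?_
    intro x hx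
    rw [interior_Ici] at hx
    rw [(hd x (lt_trans hxspos hx)).deriv]
    exact hnegIoi x hx
  have hantw : AntitoneOn w (Set.Ici xs) := hanti.antitoneOn
  constructor
  · refine ⟨xs, ⟨hxspos, hmono, hanti⟩, ?_⟩
    rintro y ⟨hy, hymono, hyanti⟩
    by_contra hne
    rcases lt_or_gt_of_ne hne with hlt | hgt
    · set m := (y + xs) / 2 with hmdef
      have h1 : w m < w y := hyanti (Set.self_mem_Ici) (by simp only [Set.mem_Ici]; linarith)
        (by linarith)
      have h2 : w y < w m := hmono ⟨le_of_lt hy, by linarith⟩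
        ⟨by linarith, by linarith⟩ (by linarith)
      linarith
    · have h1 : w xs < w y := hymono ⟨hxs0, le_of_lt hgt⟩ ⟨le_trans hxs0 (le_of_lt hgt), le_rfl⟩ hgt
      have h2 : w y < w xs := hanti Set.self_mem_Ici (Set.mem_Ici.2 (le_of_lt hgt)) hgt
      linarith
  · by_cases hbdd : ∃ m : ℝ, ∀ x, xs ≤ x → m ≤ w x
    · exfalso
      obtain ⟨m, hm⟩ := hbdd
      set C := L * (|m| + |w xs|) - P 0 with hCdef
      have hPlow : ∀ x, xs ≤ x → -C ≤ P (w x) := by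
        intro x hx
        have h1 : m ≤ w x := hm x hx
        have h2 : w x ≤ w xs := hantw Set.self_mem_Ici (Set.mem_Ici.2 hx) hx
        have habs : |w x| ≤ |m| + |w xs| := by
          rw [abs_le]
          constructor
          · have := neg_abs_le m
            have := abs_nonneg (w xs)
            linarith
          · have := le_abs_self (w xs)
            have := abs_nonneg m
            linarith
        have h3 := hLip 0 (w x)
        rw [zero_sub, abs_neg] at h3
        have h4 : P 0 - P (w x) ≤ L * (|m| + |w xs|) :=
          le_trans h3 (mul_le_mul_of_nonneg_left habs hL0)
        rw [hCdef]; linarith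
      obtain ⟨X₀, hX₀⟩ := Filter.eventually_atTop.1 (hhtop.eventually_ge_atTop (γ + C + σ ^ 2 / 2))
      set X := max X₀ xs with hXdef
      have hXxs : xs ≤ X := le_max_right _ _
      have hw'le : ∀ x, X < x → w' x ≤ -1 := by
        intro x hx
        have hxxs : xs ≤ x := le_trans hXxs (le_of_lt hx)
        have hx0 : (0:ℝ) ≤ x := le_trans hxs0 hxxs
        have hODEx := hODE x hx0
        have hh' : γ + C + σ ^ 2 / 2 ≤ h x := hX₀ x (le_trans (le_max_left _ _) (le_of_lt hx))
        have hP' := hPlow x hxxs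
        nlinarith
      have hgant : AntitoneOn (fun x => w x + x) (Set.Ici X) := by
        refine antitoneOn_of_deriv_nonpos (convex_Ici X) ?_ ?_ ?_
        · exact (hwc.mono (Set.Ici_subset_Ici.2 (le_trans hxs0 hXxs))).add continuous_id.continuousOn
        · intro x hx
          rw [interior_Ici] at hx
          have hxp : (0:ℝ) < x := lt_of_le_of_lt (le_trans hxs0 hXxs) hx
          have hD : HasDerivAt (fun y => w y + y) (w' x + 1) x := by
            exact (hd x hxp).add (hasDerivAt_id' x)
          exact hD.differentiableAt.differentiableWithinAt
        · intro x hx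
          rw [interior_Ici] at hx
          have hxp : (0:ℝ) < x := lt_of_le_of_lt (le_trans hxs0 hXxs) hx
          have hD : HasDerivAt (fun y => w y + y) (w' x + 1) x := by
            exact (hd x hxp).add (hasDerivAt_id' x)
          rw [hD.deriv]
          linarith [hw'le x hx]
      set x₂ := max (X + 1) (w X + X - m + 1) with hx₂def
      have hXx₂ : X ≤ x₂ := le_trans (by linarith) (le_max_left _ _)
      have h1 : w x₂ + x₂ ≤ w X + X :=
        hgant Set.self_mem_Ici (Set.mem_Ici.2 hXx₂) hXx₂
      have h2 : m ≤ w x₂ := hm x₂ (le_trans hXxs hXx₂)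
      have h3 : w X + X - m + 1 ≤ x₂ := le_max_right _ _
      linarith
    · push_neg at hbdd
      rw [Filter.tendsto_atBot]
      intro B
      obtain ⟨x₀, hx₀ge, hx₀lt⟩ := hbdd B
      rw [Filter.eventually_atTop]
      refine ⟨x₀, fun x hx => ?_⟩
      have : w x ≤ w x₀ := hantw (Set.mem_Ici.2 hx₀ge) (Set.mem_Ici.2 (le_trans hx₀ge hx)) hx
      linarith
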